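/- Let T, N, B : ℝ² → ℝ³ be smooth (C^∞) maps of (t,x) that are orthonormal at every point with B = T × N, and let κ, τ : ℝ² → ℝ be smooth with κ(t,x) > 0, satisfying the Serret–Frenet equations ∂_x T = κN, ∂_x N = -κT + τB, ∂_x B = -τN at every (t,x). Suppose the tangent vector evolves by the Heisenberg (vortex filament) flow ∂_t T = -κτ N + (∂_x κ) B (equivalently ∂_t T = T × ∂_x²T). Then the curvature and torsion satisfy the vortex filament equations ∂_t κ = -κ ∂_x τ - 2 (∂_x κ) τ and ∂_t τ = ∂_x( ∂_x²κ/κ - τ² + (1/2)κ² ). -/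

import Mathlib

noncomputable section

/-- Euclidean dot product on `ℝ³`. -/
def dot3 (a b : Fin 3 → ℝ) : ℝ := a 0 * b 0 + a 1 * b 1 + a 2 * b 2

/-- Cross product on `ℝ³`. -/
def cross3 (a b : Fin 3 → ℝ) : Fin 3 → ℝ :=
  ![a 1 * b 2 - a 2 * b 1, a 2 * b 0 - a 0 * b 2, a 0 * b 1 - a 1 * b 0]

/-- Partial derivative with respect to the first variable `t`. -/
def pt {E : Type*} [NormedAddCommGroup E] [NormedSpace ℝ E]
    (f : ℝ × ℝ → E) : ℝ × ℝ → E := fun p => deriv (fun s => f (s, p.2)) p.1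

/-- Partial derivative with respect to the second variable `x`. -/
def px {E : Type*} [NormedAddCommGroup E] [NormedSpace ℝ E]
    (f : ℝ × ℝ → E) : ℝ × ℝ → E := fun p => deriv (fun s => f (p.1, s)) p.2

section Infra

variable {E : Type*} [NormedAddCommGroup E] [NormedSpace ℝ E] {f : ℝ × ℝ → E}

lemma hasDerivAt_pt (hf : ContDiff ℝ (⊤:ℕ∞) f) (p : ℝ × ℝ) :
    HasDerivAt (fun s => f (s, p.2)) (pt f p) p.1 := by
  have hd : DifferentiableAt ℝ (fun s => f (s, p.2)) p.1 :=
    ((hf.comp (contDiff_id.prodMk contDiff_const)).differentiable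
      (by simp)).differentiableAt
  exact hd.hasDerivAt

lemma hasDerivAt_px (hf : ContDiff ℝ (⊤:ℕ∞) f) (p : ℝ × ℝ) :
    HasDerivAt (fun s => f (p.1, s)) (px f p) p.2 := by
  have hd : DifferentiableAt ℝ (fun s => f (p.1, s)) p.2 :=
    ((hf.comp (contDiff_const.prodMk contDiff_id)).differentiable
      (by simp)).differentiableAt
  exact hd.hasDerivAt

lemma pt_eq_fderiv (hf : ContDiff ℝ (⊤:ℕ∞) f) (p : ℝ × ℝ) :
    pt f p = fderiv ℝ f p (1, 0) := by
  have h : HasDerivAt (fun s => f (s, p.2)) (fderiv ℝ f p ((1:ℝ), (0:ℝ))) p.1 := by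
    have h1 : HasDerivAt (fun s : ℝ => (s, p.2)) ((1:ℝ), (0:ℝ)) p.1 :=
      (hasDerivAt_id p.1).prodMk (hasDerivAt_const _ _)
    have h2 : HasFDerivAt f (fderiv ℝ f p) p :=
      (hf.differentiable (by simp) p).hasFDerivAt
    exact h2.comp_hasDerivAt p.1 h1
  exact ((hasDerivAt_pt hf p).unique h)

lemma px_eq_fderiv (hf : ContDiff ℝ (⊤:ℕ∞) f) (p : ℝ × ℝ) :
    px f p = fderiv ℝ f p (0, 1) := by
  have h : HasDerivAt (fun s => f (p.1, s)) (fderiv ℝ f p ((0:ℝ), (1:ℝ))) p.2 := by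
    have h1 : HasDerivAt (fun s : ℝ => (p.1, s)) ((0:ℝ), (1:ℝ)) p.2 :=
      (hasDerivAt_const _ _).prodMk (hasDerivAt_id p.2)
    have h2 : HasFDerivAt f (fderiv ℝ f p) p :=
      (hf.differentiable (by simp) p).hasFDerivAt
    exact h2.comp_hasDerivAt p.2 h1
  exact ((hasDerivAt_px hf p).unique h)

lemma contDiff_pt (hf : ContDiff ℝ (⊤:ℕ∞) f) : ContDiff ℝ (⊤:ℕ∞) (pt f) := by
  have h : pt f = fun p => fderiv ℝ f p (1, 0) := funext fun p => pt_eq_fderiv hf p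
  rw [h]
  exact (hf.fderiv_right (by exact_mod_cast le_top)).clm_apply contDiff_const

lemma contDiff_px (hf : ContDiff ℝ (⊤:ℕ∞) f) : ContDiff ℝ (⊤:ℕ∞) (px f) := by
  have h : px f = fun p => fderiv ℝ f p (0, 1) := funext fun p => px_eq_fderiv hf p
  rw [h]
  exact (hf.fderiv_right (by exact_mod_cast le_top)).clm_apply contDiff_const

lemma clairaut (hf : ContDiff ℝ (⊤:ℕ∞) f) (p : ℝ × ℝ) :
    pt (px f) p = px (pt f) p := by
  have hf' : ContDiff ℝ (⊤:ℕ∞) (fderiv ℝ f) := hf.fderiv_right (by exact_mod_cast le_top)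
  have hsym : ∀ v w, fderiv ℝ (fderiv ℝ f) p v w = fderiv ℝ (fderiv ℝ f) p w v := by
    intro v w
    exact second_derivative_symmetric
      (fun y => (hf.differentiable (by simp) y).hasFDerivAt)
      ((hf'.differentiable (by simp) p).hasFDerivAt) v w
  have key : ∀ v w : ℝ × ℝ,
      fderiv ℝ (fun q => fderiv ℝ f q w) p v = fderiv ℝ (fderiv ℝ f) p v w := by
    intro v w
    have h : HasFDerivAt (fun q => fderiv ℝ f q w)
        ((ContinuousLinearMap.apply ℝ E w).comp (fderiv ℝ (fderiv ℝ f) p)) p :=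
      (ContinuousLinearMap.apply ℝ E w).hasFDerivAt.comp p
        ((hf'.differentiable (by simp) p).hasFDerivAt)
    rw [h.fderiv]; rfl
  have e1 : px f = fun q => fderiv ℝ f q (0, 1) := funext fun q => px_eq_fderiv hf q
  have e2 : pt f = fun q => fderiv ℝ f q (1, 0) := funext fun q => pt_eq_fderiv hf q
  rw [e1, e2, pt_eq_fderiv (hf'.clm_apply contDiff_const),
    px_eq_fderiv (hf'.clm_apply contDiff_const), key, key, hsym]

end Infra

lemma dot3_add_left (a b c : Fin 3 → ℝ) : dot3 (a + b) c = dot3 a c + dot3 b c := by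
  simp [dot3]; ring
lemma dot3_smul_left (r : ℝ) (a c : Fin 3 → ℝ) : dot3 (r • a) c = r * dot3 a c := by
  simp [dot3]; ring
lemma dot3_comm (a b : Fin 3 → ℝ) : dot3 a b = dot3 b a := by simp [dot3]; ring
lemma dot3_neg_left (a c : Fin 3 → ℝ) : dot3 (-a) c = -dot3 a c := by simp [dot3]; ring

lemma hasDerivAt_dot3 {f g : ℝ → Fin 3 → ℝ} {vf vg : Fin 3 → ℝ} {x : ℝ}
    (hf : HasDerivAt f vf x) (hg : HasDerivAt g vg x) :
    HasDerivAt (fun s => dot3 (f s) (g s)) (dot3 vf (g x) + dot3 (f x) vg) x := by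
  have hfi : ∀ i, HasDerivAt (fun s => f s i) (vf i) x := fun i => (hasDerivAt_pi.1 hf) i
  have hgi : ∀ i, HasDerivAt (fun s => g s i) (vg i) x := fun i => (hasDerivAt_pi.1 hg) i
  have h := (((hfi 0).mul (hgi 0)).add ((hfi 1).mul (hgi 1))).add ((hfi 2).mul (hgi 2))
  refine (h.congr_deriv (by unfold dot3; ring)).congr_of_eventuallyEq
    (Filter.Eventually.of_forall fun s => ?_)
  simp only [dot3, Pi.add_apply, Pi.mul_apply]

lemma frame_expand {t n b : Fin 3 → ℝ}
    (htt : dot3 t t = 1) (hnn : dot3 n n = 1) (hbb : dot3 b b = 1)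
    (htn : dot3 t n = 0) (htb : dot3 t b = 0) (hnb : dot3 n b = 0)
    (v : Fin 3 → ℝ) : v = dot3 v t • t + dot3 v n • n + dot3 v b • b := by
  simp only [dot3] at htt hnn hbb htn htb hnb
  set M : Matrix (Fin 3) (Fin 3) ℝ := Matrix.of ![t, n, b] with hM
  have h1 : M * Matrix.transpose M = 1 := by
    ext i j
    simp only [Matrix.mul_apply, Fin.sum_univ_three, Matrix.transpose_apply, hM,
      Matrix.one_apply, Matrix.of_apply]
    fin_cases i <;> fin_cases j <;> simp <;> linarith
  have h2 : Matrix.transpose M * M = 1 := mul_eq_one_comm.mp h1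
  have e : ∀ k j : Fin 3, t k * t j + n k * n j + b k * b j
      = if k = j then 1 else 0 := by
    intro k j
    have h3 := congrFun (congrFun h2 k) j
    simp only [Matrix.mul_apply, Fin.sum_univ_three, Matrix.transpose_apply, hM,
      Matrix.one_apply, Matrix.of_apply] at h3
    rw [← h3]
    fin_cases k <;> fin_cases j <;> simp <;> ring
  funext j
  have e0 := e 0 j; have e1 := e 1 j; have e2 := e 2 j
  simp only [dot3, Pi.add_apply, Pi.smul_apply, smul_eq_mul]
  fin_cases j <;> simp at e0 e1 e2 ⊢ <;>
    linear_combination (-(v 0 * e0) - v 1 * e1 - v 2 * e2)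

/-- Under the Heisenberg (vortex filament) flow `T_t = -κτ N + κ_x B`, the
curvature and torsion satisfy the vortex filament equations. -/
theorem vortex_filament_equations
    (T N B : ℝ × ℝ → Fin 3 → ℝ) (κ τ : ℝ × ℝ → ℝ)
    (hT : ContDiff ℝ (⊤ : ℕ∞) T) (hN : ContDiff ℝ (⊤ : ℕ∞) N)
    (hB : ContDiff ℝ (⊤ : ℕ∞) B)
    (hκ : ContDiff ℝ (⊤ : ℕ∞) κ) (hτ : ContDiff ℝ (⊤ : ℕ∞) τ)
    (horthTT : ∀ p, dot3 (T p) (T p) = 1)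
    (horthNN : ∀ p, dot3 (N p) (N p) = 1)
    (horthBB : ∀ p, dot3 (B p) (B p) = 1)
    (horthTN : ∀ p, dot3 (T p) (N p) = 0)
    (horthTB : ∀ p, dot3 (T p) (B p) = 0)
    (horthNB : ∀ p, dot3 (N p) (B p) = 0)
    (hBTN : ∀ p, B p = cross3 (T p) (N p))
    (hκpos : ∀ p, 0 < κ p)
    (hTx : ∀ p, px T p = κ p • N p)
    (hNx : ∀ p, px N p = (-κ p) • T p + τ p • B p)
    (hBx : ∀ p, px B p = (-τ p) • N p)
    (hTt : ∀ p, pt T p = (-(κ p * τ p)) • N p + (px κ p) • B p) :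
    (∀ p, pt κ p = -(κ p) * px τ p - 2 * (px κ p) * τ p) ∧
    (∀ p, pt τ p
      = px (fun q => px (px κ) q / κ q - (τ q) ^ 2 + (1 / 2) * (κ q) ^ 2) p) := by
  have hκx : ContDiff ℝ (⊤:ℕ∞) (px κ) := contDiff_px hκ
  have hκxx : ContDiff ℝ (⊤:ℕ∞) (px (px κ)) := contDiff_px hκx
  have hβ : ContDiff ℝ (⊤:ℕ∞) (fun q => px (px κ) q / κ q - τ q ^ 2) :=
    (hκxx.div hκ (fun p => (hκpos p).ne')).sub (hτ.pow 2)
  -- commuted orthogonality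
  have cNT : ∀ p, dot3 (N p) (T p) = 0 := fun p => (dot3_comm _ _).trans (horthTN p)
  have cBT : ∀ p, dot3 (B p) (T p) = 0 := fun p => (dot3_comm _ _).trans (horthTB p)
  have cBN : ∀ p, dot3 (B p) (N p) = 0 := fun p => (dot3_comm _ _).trans (horthNB p)
  -- differentiating constant dot products in t
  have dconst : ∀ (f g : ℝ × ℝ → Fin 3 → ℝ) (c : ℝ), ContDiff ℝ (⊤:ℕ∞) f →
      ContDiff ℝ (⊤:ℕ∞) g → (∀ p, dot3 (f p) (g p) = c) →
      ∀ p, dot3 (pt f p) (g p) + dot3 (f p) (pt g p) = 0 := by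
    intro f g c hf hg hfg p
    have h1 := hasDerivAt_dot3 (hasDerivAt_pt hf p) (hasDerivAt_pt hg p)
    have h2 : (fun s => dot3 (f (s, p.2)) (g (s, p.2))) = fun _ => c :=
      funext fun s => hfg _
    rw [h2] at h1
    exact h1.unique (hasDerivAt_const _ _)
  have hNtN : ∀ p, dot3 (pt N p) (N p) = 0 := by
    intro p
    have h := dconst N N 1 hN hN horthNN p
    have h2 : dot3 (N p) (pt N p) = dot3 (pt N p) (N p) := dot3_comm _ _
    linarith
  have hBtB : ∀ p, dot3 (pt B p) (B p) = 0 := by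
    intro p
    have h := dconst B B 1 hB hB horthBB p
    have h2 : dot3 (B p) (pt B p) = dot3 (pt B p) (B p) := dot3_comm _ _
    linarith
  -- dot3 (pt T p) (N p) = -(κ τ), dot3 (pt T p) (B p) = κ_x
  have hTtN : ∀ p, dot3 (pt T p) (N p) = -(κ p * τ p) := by
    intro p
    rw [hTt p]
    simp [dot3_add_left, dot3_smul_left, dot3_neg_left, horthNN p, cBN p]
  have hTtB : ∀ p, dot3 (pt T p) (B p) = px κ p := by
    intro p
    rw [hTt p]
    simp [dot3_add_left, dot3_smul_left, dot3_neg_left, horthBB p, horthNB p]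
  have hNtT : ∀ p, dot3 (pt N p) (T p) = κ p * τ p := by
    intro p
    have h := dconst T N 0 hT hN horthTN p
    have h2 : dot3 (T p) (pt N p) = dot3 (pt N p) (T p) := dot3_comm _ _
    have h3 := hTtN p
    linarith
  have hBtT : ∀ p, dot3 (pt B p) (T p) = -(px κ p) := by
    intro p
    have h := dconst T B 0 hT hB horthTB p
    have h2 : dot3 (T p) (pt B p) = dot3 (pt B p) (T p) := dot3_comm _ _
    have h3 := hTtB p
    linarith
  have hNB' : ∀ p, dot3 (pt N p) (B p) + dot3 (N p) (pt B p) = 0 :=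
    dconst N B 0 hN hB horthNB
  -- Clairaut for T
  have hC : ∀ p, κ p • pt N p + pt κ p • N p
      = ((-(κ p * τ p)) • ((-κ p) • T p + τ p • B p)
          + (-(px κ p * τ p + κ p * px τ p)) • N p)
        + (px κ p • ((-τ p) • N p) + px (px κ) p • B p) := by
    intro p
    have hL : pt (px T) p = κ p • pt N p + pt κ p • N p := by
      have h := (hasDerivAt_pt hκ p).smul (hasDerivAt_pt hN p)
      have h2 : HasDerivAt (fun s => px T (s, p.2))
          (κ p • pt N p + pt κ p • N p) p.1 :=
        h.congr_of_eventuallyEq (Filter.Eventually.of_forall fun s => hTx (s, p.2))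
      exact h2.deriv
    have hR : px (pt T) p = ((-(κ p * τ p)) • px N p
          + (-(px κ p * τ p + κ p * px τ p)) • N p)
        + (px κ p • px B p + px (px κ) p • B p) := by
      have h := ((((hasDerivAt_px hκ p).mul (hasDerivAt_px hτ p)).neg).smul
          (hasDerivAt_px hN p)).add ((hasDerivAt_px hκx p).smul (hasDerivAt_px hB p))
      have h2 : HasDerivAt (fun s => pt T (p.1, s))
          (((-(κ p * τ p)) • px N p + (-(px κ p * τ p + κ p * px τ p)) • N p)
            + (px κ p • px B p + px (px κ) p • B p)) p.2 :=
        h.congr_of_eventuallyEq (Filter.Eventually.of_forall fun s => hTt (p.1, s))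
      exact h2.deriv
    rw [hNx p, hBx p] at hR
    exact hL.symm.trans ((clairaut hT p).trans hR)
  -- first filament equation
  have goal1 : ∀ p, pt κ p = -(κ p) * px τ p - 2 * (px κ p) * τ p := by
    intro p
    have eN := congrArg (fun v => dot3 v (N p)) (hC p)
    simp only [dot3_add_left, dot3_smul_left, hNtN p, horthNN p, horthTN p, cNT p,
      cBN p, mul_zero, mul_one, add_zero, zero_add] at eN
    linear_combination eN
  -- dot3 (pt N p) (B p) = κ_xx/κ - τ²
  have hNtB : ∀ p, dot3 (pt N p) (B p) = px (px κ) p / κ p - τ p ^ 2 := by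
    intro p
    have eB := congrArg (fun v => dot3 v (B p)) (hC p)
    simp only [dot3_add_left, dot3_smul_left, horthBB p, horthNB p, horthTB p, cBN p,
      mul_zero, mul_one, add_zero, zero_add] at eB
    have hκne : κ p ≠ 0 := (hκpos p).ne'
    field_simp
    linear_combination eB
  have hBtN : ∀ p, dot3 (pt B p) (N p) = -(px (px κ) p / κ p - τ p ^ 2) := by
    intro p
    have h := hNB' p
    have h2 : dot3 (N p) (pt B p) = dot3 (pt B p) (N p) := dot3_comm _ _
    have h3 := hNtB p
    linarith
  -- frame expansions of pt N and pt B
  have hNt : ∀ p, pt N p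
      = (κ p * τ p) • T p + (px (px κ) p / κ p - τ p ^ 2) • B p := by
    intro p
    have h := frame_expand (horthTT p) (horthNN p) (horthBB p) (horthTN p)
      (horthTB p) (horthNB p) (pt N p)
    rw [hNtT p, hNtN p, hNtB p, zero_smul, add_zero] at h
    exact h
  have hBt : ∀ p, pt B p
      = (-(px κ p)) • T p + (-(px (px κ) p / κ p - τ p ^ 2)) • N p := by
    intro p
    have h := frame_expand (horthTT p) (horthNN p) (horthBB p) (horthTN p)
      (horthTB p) (horthNB p) (pt B p)
    rw [hBtT p, hBtN p, hBtB p, zero_smul, add_zero] at h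
    exact h
  refine ⟨goal1, ?_⟩
  -- Clairaut for N
  intro p
  have hL : pt (px N) p = ((-κ p) • ((-(κ p * τ p)) • N p + px κ p • B p)
        + (-(pt κ p)) • T p)
      + (τ p • ((-(px κ p)) • T p + (-(px (px κ) p / κ p - τ p ^ 2)) • N p)
        + pt τ p • B p) := by
    have h := (((hasDerivAt_pt hκ p).neg).smul (hasDerivAt_pt hT p)).add
      ((hasDerivAt_pt hτ p).smul (hasDerivAt_pt hB p))
    have h2 : HasDerivAt (fun s => px N (s, p.2))
        (((-κ p) • pt T p + (-(pt κ p)) • T p)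
          + (τ p • pt B p + pt τ p • B p)) p.1 :=
      h.congr_of_eventuallyEq (Filter.Eventually.of_forall fun s => hNx (s, p.2))
    rw [hTt p, hBt p] at h2
    exact h2.deriv
  have hR : px (pt N) p = ((κ p * τ p) • (κ p • N p)
        + (px κ p * τ p + κ p * px τ p) • T p)
      + ((px (px κ) p / κ p - τ p ^ 2) • ((-τ p) • N p)
        + px (fun q => px (px κ) q / κ q - τ q ^ 2) p • B p) := by
    have h := (((hasDerivAt_px hκ p).mul (hasDerivAt_px hτ p)).smul
        (hasDerivAt_px hT p)).add ((hasDerivAt_px hβ p).smul (hasDerivAt_px hB p))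
    have h2 : HasDerivAt (fun s => pt N (p.1, s))
        (((κ p * τ p) • px T p + (px κ p * τ p + κ p * px τ p) • T p)
          + ((px (px κ) p / κ p - τ p ^ 2) • px B p
            + px (fun q => px (px κ) q / κ q - τ q ^ 2) p • B p)) p.2 :=
      h.congr_of_eventuallyEq (Filter.Eventually.of_forall fun s => hNt (p.1, s))
    rw [hTx p, hBx p] at h2
    exact h2.deriv
  have hCN := hL.symm.trans ((clairaut hN p).trans hR)
  have eB := congrArg (fun v => dot3 v (B p)) hCN
  simp only [dot3_add_left, dot3_smul_left, horthBB p, horthNB p, horthTB p, cBN p,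
    cBT p, mul_zero, mul_one, add_zero, zero_add, zero_mul] at eB
  -- eB : pt τ p - κ p κ_x = px β p  (up to arrangement)
  have hsum : HasDerivAt
      (fun s => (px (px κ) (p.1, s) / κ (p.1, s) - τ (p.1, s) ^ 2)
        + 1 / 2 * κ (p.1, s) ^ 2)
      (px (fun q => px (px κ) q / κ q - τ q ^ 2) p
        + 1 / 2 * (2 * κ p ^ 1 * px κ p)) p.2 :=
    (hasDerivAt_px hβ p).add (((hasDerivAt_px hκ p).pow 2).const_mul (1 / 2))
  have e2 : px (fun q => px (px κ) q / κ q - τ q ^ 2 + 1 / 2 * κ q ^ 2) p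
      = px (fun q => px (px κ) q / κ q - τ q ^ 2) p
        + 1 / 2 * (2 * κ p ^ 1 * px κ p) := hsum.deriv
  rw [e2]
  linear_combination eB
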